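/- Fix integers d ≥ 1, N₀ ≥ 1, a real h > 0, a real p with 1 < p ≤ 1 + 2/d, set δ := 1/N₀, and let R ∈ ℕ, I > 0. Let u : ℕ → (ℤ^d → ℝ) (defined for n ≥ N₀) satisfy, for all n > N₀ and i ∈ ℤ^d, the recurrence u_{n+1}(i) = (δ²/h²)·Σ_{j=1}^d (u_n(i − e_j) + u_n(i + e_j)) + (2 − 2d·δ²/h²)·u_n(i) − u_{n−1}(i) + δ^(2−p)·|u_n(i)|^(p−1)·tan(δ·|u_n(i)|/n^(p−1)). Assume: (i) u_n(i) = 0 for n ∈ {N₀, N₀+1} whenever ‖i‖₁ > R; (ii) Σ_{i∈ℤ^d} u_{N₀}(i) ≥ 0; (iii) Σ_{i∈ℤ^d} (u_{N₀+1}(i) − u_{N₀}(i)) > I. Then the solution blows up in finite time: there exist an integer N_b ≥ N₀ and i_b ∈ ℤ^d such that |u_{N_b}(i_b)| ≥ (π/2)·δ^(−1)·N_b^(p−1). -/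

import Mathlib

open Real

section Aux

lemma aux_sum_eq {α M : Type*} [DecidableEq α] [AddCommMonoid M] (f : α → M)
    (F G : Finset α) (hF : ∀ i ∉ F, f i = 0) (hG : ∀ i ∉ G, f i = 0) :
    ∑ i ∈ F, f i = ∑ i ∈ G, f i := by
  rw [Finset.sum_subset (Finset.subset_union_left (s₂ := G))
      (fun x _ hx => hF x hx),
    Finset.sum_subset (Finset.subset_union_right (s₁ := F))
      (fun x _ hx => hG x hx)]

lemma aux_single_natAbs {d : ℕ} (j : Fin d) (c : ℤ) :
    ∑ k, ((Pi.single j c : Fin d → ℤ) k).natAbs = c.natAbs := by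
  have : ∀ k, ((Pi.single j c : Fin d → ℤ) k).natAbs
      = (Pi.single j c.natAbs : Fin d → ℕ) k := by
    intro k
    rcases eq_or_ne k j with rfl | hk
    · simp
    · simp [Pi.single_apply, hk]
  rw [Finset.sum_congr rfl fun k _ => this k]
  simp [Finset.sum_pi_single']

lemma aux_norm_add {d : ℕ} (i : Fin d → ℤ) (j : Fin d) (c : ℤ) :
    (∑ k, ((i + Pi.single j c : Fin d → ℤ) k).natAbs) ≤ (∑ k, (i k).natAbs) + c.natAbs := by
  calc (∑ k, ((i + Pi.single j c : Fin d → ℤ) k).natAbs)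
      ≤ ∑ k, ((i k).natAbs + ((Pi.single j c : Fin d → ℤ) k).natAbs) := by
        apply Finset.sum_le_sum
        intro k _
        exact Int.natAbs_add_le _ _
    _ = (∑ k, (i k).natAbs) + ∑ k, ((Pi.single j c : Fin d → ℤ) k).natAbs :=
        Finset.sum_add_distrib
    _ = (∑ k, (i k).natAbs) + c.natAbs := by rw [aux_single_natAbs]

lemma aux_norm_rev {d : ℕ} (i : Fin d → ℤ) (j : Fin d) (c : ℤ) :
    (∑ k, (i k).natAbs) ≤ (∑ k, ((i + Pi.single j c : Fin d → ℤ) k).natAbs) + c.natAbs := by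
  have := aux_norm_add (i + Pi.single j c) j (-c)
  have h2 : (i + Pi.single j c : Fin d → ℤ) + Pi.single j (-c) = i := by
    rw [Pi.single_neg]; abel
  rw [h2] at this
  simpa using this

lemma aux_tan_ge (x : ℝ) (h0 : 0 ≤ x) (h2 : x < π / 2) : x ≤ Real.tan x := by
  rcases eq_or_lt_of_le h0 with h | h
  · simp [← h]
  · exact (Real.lt_tan h h2).le

lemma aux_seq_blowup (b : ℕ → ℝ) (c I p C E : ℝ)
    (hc : 0 < c) (hI : 0 < I) (hp : 1 < p)
    (hb0 : I ≤ b 0)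
    (hrec : ∀ j, b j + c * (b j) ^ p ≤ b (j + 1))
    (hC : 0 < C) (hE : 1 ≤ E)
    (hbound : ∀ j, b j ≤ C * E ^ j) : False := by
  have hbI : ∀ j, I ≤ b j := by
    intro j
    induction j with
    | zero => exact hb0
    | succ j ih =>
      have hbj : 0 < b j := lt_of_lt_of_le hI ih
      have : (0:ℝ) ≤ c * b j ^ p := by positivity
      nlinarith [hrec j]
  have hbpos : ∀ j, 0 < b j := fun j => lt_of_lt_of_le hI (hbI j)
  set ρ : ℝ := c * I ^ (p - 1) with hρ
  have hρpos : 0 < ρ := by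
    have : (0:ℝ) < I ^ (p - 1) := Real.rpow_pos_of_pos hI _
    positivity
  have hgrow : ∀ j, I * (1 + ρ) ^ j ≤ b j := by
    intro j
    induction j with
    | zero => simpa using hb0
    | succ j ih =>
      have h1 : I ^ (p - 1) ≤ (b j) ^ (p - 1) :=
        Real.rpow_le_rpow hI.le (hbI j) (by linarith)
      have h2 : (b j) ^ p = (b j) ^ (p - 1) * b j := by
        rw [← Real.rpow_add_one (hbpos j).ne']; ring_nf
      have h3 : ρ * b j ≤ c * (b j) ^ p := by
        rw [h2, hρ]
        have := mul_le_mul_of_nonneg_right h1 (hbpos j).le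
        nlinarith
      have h4 : (1 + ρ) * b j ≤ b (j + 1) := by
        have := hrec j; nlinarith
      calc I * (1 + ρ) ^ (j + 1) = (1 + ρ) * (I * (1 + ρ) ^ j) := by ring
        _ ≤ (1 + ρ) * b j := by
            apply mul_le_mul_of_nonneg_left ih; linarith
        _ ≤ b (j + 1) := h4
  set Q : ℝ := E + 1 with hQ
  have hQ1 : 1 < Q := by linarith
  set θ : ℝ := max 1 ((Q / c) ^ (p - 1)⁻¹) with hθ
  have hθ1 : 1 ≤ θ := le_max_left _ _
  have hθpow : Q / c ≤ θ ^ (p - 1) := by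
    have h1 : ((Q / c) ^ (p - 1)⁻¹) ^ (p - 1) = Q / c :=
      Real.rpow_inv_rpow (by positivity) (by linarith)
    calc Q / c = ((Q / c) ^ (p - 1)⁻¹) ^ (p - 1) := h1.symm
      _ ≤ θ ^ (p - 1) := by
          apply Real.rpow_le_rpow (by positivity) (le_max_right _ _) (by linarith)
  obtain ⟨j₂, hj₂⟩ : ∃ j, θ ≤ b j := by
    obtain ⟨n, hn⟩ := pow_unbounded_of_one_lt (θ / I) (by linarith : (1:ℝ) < 1 + ρ)
    refine ⟨n, ?_⟩
    have := hgrow n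
    have : θ < I * (1 + ρ) ^ n := by
      rw [div_lt_iff₀ hI] at hn; linarith [hn]
    linarith [hgrow n]
  have hdouble : ∀ m, θ * Q ^ m ≤ b (j₂ + m) := by
    intro m
    induction m with
    | zero => simpa using hj₂
    | succ m ih =>
      have hθQ : θ ≤ θ * Q ^ m := by
        nlinarith [pow_le_pow_right₀ hQ1.le (Nat.zero_le m), pow_pos (by linarith : (0:ℝ) < Q) m]
      have hbm : θ ≤ b (j₂ + m) := le_trans hθQ ih
      have hb' : 0 < b (j₂ + m) := hbpos _
      have h1 : θ ^ (p - 1) ≤ (b (j₂ + m)) ^ (p - 1) :=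
        Real.rpow_le_rpow (by linarith) hbm (by linarith)
      have h2 : (b (j₂ + m)) ^ p = (b (j₂ + m)) ^ (p - 1) * b (j₂ + m) := by
        rw [← Real.rpow_add_one hb'.ne']; ring_nf
      have h3 : Q * b (j₂ + m) ≤ c * (b (j₂ + m)) ^ p := by
        rw [h2]
        have hqc : Q / c ≤ (b (j₂ + m)) ^ (p - 1) := le_trans hθpow h1
        rw [div_le_iff₀ hc] at hqc
        nlinarith
      have := hrec (j₂ + m)
      have hbQ : Q * b (j₂ + m) ≤ b (j₂ + m + 1) := by nlinarith
      calc θ * Q ^ (m + 1) = Q * (θ * Q ^ m) := by ring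
        _ ≤ Q * b (j₂ + m) := by nlinarith
        _ ≤ b (j₂ + m + 1) := hbQ
  obtain ⟨m, hm⟩ := pow_unbounded_of_one_lt (C * E ^ j₂ / θ) (by
    have : 0 < E := by linarith
    rw [lt_div_iff₀ this]
    · linarith
    : (1:ℝ) < Q / E)
  have hEpos : 0 < E := by linarith
  have hb1 := hdouble m
  have hb2 := hbound (j₂ + m)
  have hEQ : C * E ^ j₂ / θ < (Q / E) ^ m := hm
  have hθpos : (0:ℝ) < θ := by linarith
  have hkey : C * E ^ (j₂ + m) < θ * Q ^ m := by
    rw [div_pow, lt_div_iff₀ (by positivity : (0:ℝ) < E ^ m), div_mul_eq_mul_div,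
      div_lt_iff₀ hθpos] at hEQ
    have he : C * E ^ (j₂ + m) = C * E ^ j₂ * E ^ m := by rw [pow_add]; ring
    nlinarith [pow_pos hEpos m, pow_pos (by linarith : (0:ℝ) < Q) m]
  linarith

end Aux

set_option maxHeartbeats 2000000 in
theorem discrete_damped_wave_blowup
    (d N₀ : ℕ) (hd : 1 ≤ d) (hN₀ : 1 ≤ N₀)
    (h : ℝ) (hh : 0 < h)
    (p : ℝ) (hp1 : 1 < p) (hp2 : p ≤ 1 + 2 / d)
    (δ : ℝ) (hδ : δ = 1 / N₀)
    (R : ℕ) (I : ℝ) (hI : 0 < I)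
    (u : ℕ → (Fin d → ℤ) → ℝ)
    (hrec : ∀ n, N₀ < n → ∀ i : Fin d → ℤ,
      u (n + 1) i =
        δ ^ 2 / h ^ 2 * ∑ j : Fin d, (u n (i - Pi.single j 1) + u n (i + Pi.single j 1))
        + (2 - 2 * d * δ ^ 2 / h ^ 2) * u n i - u (n - 1) i
        + δ ^ ((2 : ℝ) - p) * |u n i| ^ (p - 1) * Real.tan (δ * |u n i| / (n : ℝ) ^ (p - 1)))
    (hsupp : ∀ i : Fin d → ℤ, R < ∑ k, (i k).natAbs → u N₀ i = 0 ∧ u (N₀ + 1) i = 0)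
    (hsum0 : 0 ≤ ∑ᶠ i : Fin d → ℤ, u N₀ i)
    (hsum1 : I < ∑ᶠ i : Fin d → ℤ, (u (N₀ + 1) i - u N₀ i)) :
    ∃ Nb : ℕ, N₀ ≤ Nb ∧ ∃ ib : Fin d → ℤ,
      |u Nb ib| ≥ (Real.pi / 2) * δ⁻¹ * (Nb : ℝ) ^ (p - 1) := by
  by_contra hcon
  push_neg at hcon
  -- basic numeric facts
  have hδpos : 0 < δ := by
    rw [hδ]; positivity
  have hd1 : (1:ℝ) ≤ (d:ℝ) := by exact_mod_cast hd
  have hp3 : p ≤ 3 := by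
    have h2d : (2:ℝ) / d ≤ 2 := by
      rw [div_le_iff₀ (by linarith)]; nlinarith
    linarith
  have hdp2 : (d:ℝ) * (p - 1) ≤ 2 := by
    have : p - 1 ≤ 2 / d := by linarith
    rw [le_div_iff₀ (by linarith : (0:ℝ) < (d:ℝ))] at this
    linarith
  -- the support radius and support finsets
  set Mf : ℕ → ℕ := fun n => R + (n - N₀) with hMf
  set W : ℕ → Finset (Fin d → ℤ) :=
    fun n => Fintype.piFinset fun _ => Finset.Icc (-(Mf n : ℤ)) (Mf n) with hW
  set S : ℕ → ℝ := fun n => ∑ i ∈ W n, u n i with hS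
  set T : ℕ → ℝ := fun n => ∑ i ∈ W n,
    δ ^ ((2 : ℝ) - p) * |u n i| ^ (p - 1) * Real.tan (δ * |u n i| / (n : ℝ) ^ (p - 1)) with hT
  set D : ℕ → ℝ := fun n => S (n + 1) - S n with hD
  -- support vanishing
  have hp1' : p - 1 ≠ 0 := by linarith
  have hZ : ∀ n, N₀ ≤ n → ∀ i : Fin d → ℤ, Mf n < ∑ k, (i k).natAbs → u n i = 0 := by
    have key : ∀ m : ℕ,
        (∀ i : Fin d → ℤ, Mf (N₀ + m) < ∑ k, (i k).natAbs → u (N₀ + m) i = 0) ∧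
        (∀ i : Fin d → ℤ, Mf (N₀ + m + 1) < ∑ k, (i k).natAbs → u (N₀ + m + 1) i = 0) := by
      intro m
      induction m with
      | zero =>
        constructor
        · intro i hi
          exact (hsupp i (by simp only [hMf] at hi; omega)).1
        · intro i hi
          exact (hsupp i (by simp only [hMf] at hi; omega)).2
      | succ m ih =>
        refine ⟨ih.2, ?_⟩
        intro i hi
        show u (N₀ + m + 1 + 1) i = 0
        have hrw := hrec (N₀ + m + 1) (by omega) i
        rw [Nat.add_sub_cancel] at hrw
        have hi' : Mf (N₀ + m + 1 + 1) < ∑ k, (i k).natAbs := hi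
        have hu1 : u (N₀ + m + 1) i = 0 := by
          apply ih.2 i
          simp only [hMf] at hi' ⊢; omega
        have hu0 : u (N₀ + m) i = 0 := by
          apply ih.1 i
          simp only [hMf] at hi' ⊢; omega
        have htrp : ∀ j : Fin d, u (N₀ + m + 1) (i + Pi.single j 1) = 0 := by
          intro j
          apply ih.2
          have := aux_norm_rev i j 1
          simp only [hMf] at hi' ⊢
          simp only [Int.natAbs_one] at this
          omega
        have htrm : ∀ j : Fin d, u (N₀ + m + 1) (i - Pi.single j 1) = 0 := by
          intro j
          have he : i - Pi.single j 1 = i + Pi.single j (-1) := by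
            rw [Pi.single_neg, ← sub_eq_add_neg]
          rw [he]
          apply ih.2
          have := aux_norm_rev i j (-1)
          simp only [hMf] at hi' ⊢
          simp only [Int.natAbs_neg, Int.natAbs_one] at this
          omega
        have hsum : ∑ j : Fin d,
            (u (N₀ + m + 1) (i - Pi.single j 1) + u (N₀ + m + 1) (i + Pi.single j 1)) = 0 :=
          Finset.sum_eq_zero fun j _ => by rw [htrm j, htrp j]; ring
        rw [hrw, hsum, hu1, hu0]
        simp [Real.zero_rpow hp1']
    intro n hn i
    obtain ⟨m, rfl⟩ := Nat.exists_eq_add_of_le hn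
    exact (key m).1 i
  -- vanishing outside W n
  have hZW : ∀ n, N₀ ≤ n → ∀ i ∉ W n, u n i = 0 := by
    intro n hn i hi
    apply hZ n hn
    rw [hW, Fintype.mem_piFinset] at hi
    push_neg at hi
    obtain ⟨k, hk⟩ := hi
    rw [Finset.mem_Icc] at hk
    push_neg at hk
    have h1 : Mf n < (i k).natAbs := by omega
    calc Mf n < (i k).natAbs := h1
      _ ≤ ∑ k, (i k).natAbs :=
        Finset.single_le_sum (f := fun k => (i k).natAbs) (fun k _ => Nat.zero_le _)
          (Finset.mem_univ k)
  have hZWc : ∀ n, N₀ ≤ n → ∀ i, u n i ≠ 0 → i ∈ W n := by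
    intro n hn i hne
    by_contra hi
    exact hne (hZW n hn i hi)
  -- step of Mf
  have hMfs : ∀ n, N₀ ≤ n → Mf (n + 1) = Mf n + 1 := by
    intro n hn; simp only [hMf]; omega
  -- W is monotone
  have hWmono : ∀ m n, m ≤ n → W m ⊆ W n := by
    intro m n hmn
    apply Fintype.piFinset_subset
    intro k
    apply Finset.Icc_subset_Icc
    · simp only [neg_le_neg_iff, Nat.cast_le]; exact Nat.add_le_add_left (Nat.sub_le_sub_right hmn _) _
    · exact_mod_cast Nat.add_le_add_left (Nat.sub_le_sub_right hmn _) _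
  -- translation of W
  have hWadd : ∀ n, N₀ ≤ n → ∀ c : ℤ, c.natAbs ≤ 1 → ∀ (i : Fin d → ℤ) (j : Fin d),
      i ∈ W n → i + Pi.single j c ∈ W (n + 1) := by
    intro n hn c hc i j hi
    rw [hW, Fintype.mem_piFinset] at hi ⊢
    intro k
    have hik := Finset.mem_Icc.mp (hi k)
    have hMs := hMfs n hn
    have hsk : (Pi.single j c : Fin d → ℤ) k = if k = j then c else 0 := Pi.single_apply ..
    rw [Finset.mem_Icc]
    have : (i + Pi.single j c : Fin d → ℤ) k = i k + (Pi.single j c : Fin d → ℤ) k := rfl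
    rw [this, hsk]
    rcases eq_or_ne k j with rfl | hkj
    · simp only [if_pos rfl]
      constructor <;> [skip; skip] <;> (push_cast; omega)
    · simp only [if_neg hkj]
      constructor <;> (push_cast; omega)
  have hZW' : ∀ m n, N₀ ≤ m → m ≤ n → ∀ i ∉ W n, u m i = 0 := by
    intro m n hm hmn i hi
    refine hZW m hm i fun hiW => hi (hWmono m n hmn hiW)
  -- translated sums
  have htrans : ∀ n, N₀ ≤ n → ∀ (j : Fin d) (c : ℤ), c.natAbs = 1 →
      ∑ i ∈ W (n + 2), u (n + 1) (i + Pi.single j c) = S (n + 1) := by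
    intro n hn j c hc
    have hm : ∑ i ∈ (W (n + 2)).map
        (Equiv.addRight (Pi.single j c : Fin d → ℤ)).toEmbedding, u (n + 1) i
        = ∑ i ∈ W (n + 2), u (n + 1) (i + Pi.single j c) := by
      rw [Finset.sum_map]
      apply Finset.sum_congr rfl
      intro i _
      simp
    rw [← hm]
    apply aux_sum_eq
    · intro i hi
      by_contra hne
      apply hi
      rw [Finset.mem_map_equiv]
      have hiW : i ∈ W (n + 1) := hZWc (n + 1) (by omega) i hne
      have h2 := hWadd (n + 1) (by omega) (-c) (by omega) i j hiW
      have hsymm : (Equiv.addRight (Pi.single j c : Fin d → ℤ)).symm i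
          = i + Pi.single j (-c) := by
        simp [Pi.single_neg, sub_eq_add_neg]
      rw [hsymm]
      exact h2
    · intro i hi
      exact hZW (n + 1) (by omega) i hi
  -- the fundamental recurrence for S
  have hSrec : ∀ n, N₀ ≤ n → S (n + 2) = 2 * S (n + 1) - S n + T (n + 1) := by
    intro n hn
    have h1 : S (n + 2) = ∑ i ∈ W (n + 2),
        (δ ^ 2 / h ^ 2 * ∑ j : Fin d,
          (u (n + 1) (i - Pi.single j 1) + u (n + 1) (i + Pi.single j 1))
        + (2 - 2 * d * δ ^ 2 / h ^ 2) * u (n + 1) i - u n i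
        + δ ^ ((2 : ℝ) - p) * |u (n + 1) i| ^ (p - 1)
            * Real.tan (δ * |u (n + 1) i| / ((n + 1 : ℕ) : ℝ) ^ (p - 1))) := by
      simp only [hS]
      apply Finset.sum_congr rfl
      intro i _
      have hr := hrec (n + 1) (by omega) i
      rw [Nat.add_sub_cancel] at hr
      exact hr
    rw [h1, Finset.sum_add_distrib, Finset.sum_sub_distrib, Finset.sum_add_distrib]
    have hA : ∑ i ∈ W (n + 2), (δ ^ 2 / h ^ 2 * ∑ j : Fin d,
        (u (n + 1) (i - Pi.single j 1) + u (n + 1) (i + Pi.single j 1)))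
        = δ ^ 2 / h ^ 2 * ((d : ℝ) * (2 * S (n + 1))) := by
      rw [← Finset.mul_sum]
      congr 1
      rw [Finset.sum_comm]
      have hj : ∀ j : Fin d, ∑ i ∈ W (n + 2),
          (u (n + 1) (i - Pi.single j 1) + u (n + 1) (i + Pi.single j 1))
          = 2 * S (n + 1) := by
        intro j
        rw [Finset.sum_add_distrib]
        have hminus : ∑ i ∈ W (n + 2), u (n + 1) (i - Pi.single j 1) = S (n + 1) := by
          have he : ∀ i : Fin d → ℤ, i - Pi.single j 1 = i + Pi.single j (-1) := by
            intro i; rw [Pi.single_neg, ← sub_eq_add_neg]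
          rw [Finset.sum_congr rfl fun i _ => by rw [he i]]
          exact htrans n hn j (-1) (by simp)
        have hplus : ∑ i ∈ W (n + 2), u (n + 1) (i + Pi.single j 1) = S (n + 1) :=
          htrans n hn j 1 (by simp)
        rw [hminus, hplus]; ring
      rw [Finset.sum_congr rfl fun j _ => hj j]
      simp [Finset.sum_const, Finset.card_univ, nsmul_eq_mul]
    have hB : ∑ i ∈ W (n + 2), (2 - 2 * d * δ ^ 2 / h ^ 2) * u (n + 1) i
        = (2 - 2 * d * δ ^ 2 / h ^ 2) * S (n + 1) := by
      rw [← Finset.mul_sum]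
      congr 1
      exact aux_sum_eq (u (n + 1)) _ _ (fun i hi => hZW' (n + 1) (n + 2) (by omega) (by omega) i hi)
        (fun i hi => hZW (n + 1) (by omega) i hi)
    have hC' : ∑ i ∈ W (n + 2), u n i = S n :=
      aux_sum_eq (u n) _ _ (fun i hi => hZW' n (n + 2) hn (by omega) i hi)
        (fun i hi => hZW n hn i hi)
    have hN : ∑ i ∈ W (n + 2), (δ ^ ((2 : ℝ) - p) * |u (n + 1) i| ^ (p - 1)
        * Real.tan (δ * |u (n + 1) i| / ((n + 1 : ℕ) : ℝ) ^ (p - 1))) = T (n + 1) := by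
      apply aux_sum_eq
      · intro i hi
        rw [hZW' (n + 1) (n + 2) (by omega) (by omega) i hi]
        simp [Real.zero_rpow hp1']
      · intro i hi
        rw [hZW (n + 1) (by omega) i hi]
        simp [Real.zero_rpow hp1']
    rw [hA, hB, hC', hN]
    have hh2 : h ^ 2 ≠ 0 := by positivity
    field_simp
    ring
  -- the tangent argument is in [0, π/2)
  have hargs : ∀ n, N₀ ≤ n → ∀ i, 0 ≤ δ * |u n i| / (n : ℝ) ^ (p - 1) ∧
      δ * |u n i| / (n : ℝ) ^ (p - 1) < π / 2 := by
    intro n hn i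
    have hnpos : (0:ℝ) < (n : ℝ) := by
      have : 0 < n := by omega
      exact_mod_cast this
    have hA : (0:ℝ) < (n : ℝ) ^ (p - 1) := Real.rpow_pos_of_pos hnpos _
    refine ⟨by positivity, ?_⟩
    have hc := hcon n (by omega) i
    rw [div_lt_iff₀ hA]
    have he : δ * (π / 2 * δ⁻¹ * (n : ℝ) ^ (p - 1)) = π / 2 * (n : ℝ) ^ (p - 1) := by
      field_simp
    nlinarith [mul_lt_mul_of_pos_left hc hδpos]
  -- T is nonnegative
  have hTn0 : ∀ n, N₀ ≤ n → 0 ≤ T n := by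
    intro n hn
    apply Finset.sum_nonneg
    intro i _
    obtain ⟨ha0, ha2⟩ := hargs n hn i
    have htan : 0 ≤ Real.tan (δ * |u n i| / (n : ℝ) ^ (p - 1)) :=
      le_trans ha0 (aux_tan_ge _ ha0 ha2)
    have h1 : (0:ℝ) ≤ δ ^ ((2:ℝ) - p) := (Real.rpow_pos_of_pos hδpos _).le
    have h2 : (0:ℝ) ≤ |u n i| ^ (p - 1) := Real.rpow_nonneg (abs_nonneg _) _
    positivity
  -- constants
  set B : ℝ := 2 * (R : ℝ) + 3 with hBdef
  have hBpos : (0:ℝ) < B := by simp only [hBdef]; positivity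
  set c₅ : ℝ := δ ^ ((3:ℝ) - p) / B ^ ((d : ℝ) * (p - 1)) with hc₅def
  have hc₅pos : 0 < c₅ := by
    have h1 : (0:ℝ) < δ ^ ((3:ℝ) - p) := Real.rpow_pos_of_pos hδpos _
    have h2 : (0:ℝ) < B ^ ((d : ℝ) * (p - 1)) := Real.rpow_pos_of_pos hBpos _
    positivity
  -- cardinality bound
  have hVle : ∀ n, N₀ ≤ n → ((W n).card : ℝ) ≤ (B * (n : ℝ)) ^ d := by
    intro n hn
    have hcard : (W n).card = (2 * Mf n + 1) ^ d := by
      rw [hW]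
      rw [Fintype.card_piFinset]
      have : ∀ k : Fin d, (Finset.Icc (-(Mf n : ℤ)) (Mf n)).card = 2 * Mf n + 1 := by
        intro k
        rw [Int.card_Icc]
        omega
      rw [Finset.prod_congr rfl fun k _ => this k]
      simp
    have hnat : 2 * Mf n + 1 ≤ (2 * R + 3) * n := by
      have h1 : Mf n ≤ R + n := by simp only [hMf]; omega
      have h2 : (2 * R + 3) * n = 2 * R * n + 3 * n := by ring
      have h3 : 2 * R ≤ 2 * R * n := Nat.le_mul_of_pos_right _ (by omega)
      omega
    have hcast : ((2 * Mf n + 1 : ℕ) : ℝ) ≤ B * (n : ℝ) := by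
      simp only [hBdef]
      push_cast
      exact_mod_cast hnat
    calc ((W n).card : ℝ) = ((2 * Mf n + 1 : ℕ) : ℝ) ^ d := by
          rw [hcard]; push_cast; ring
      _ ≤ (B * (n : ℝ)) ^ d := by
          apply pow_le_pow_left₀ (by positivity) hcast
  -- lower bound for T in terms of S
  have hTlb : ∀ n, N₀ ≤ n → 0 ≤ S n → c₅ * S n ^ p / (n : ℝ) ^ (p + 1) ≤ T n := by
    intro n hn hSnn
    have hnpos : (0:ℝ) < (n : ℝ) := by
      have h0 : 0 < n := by omega
      exact_mod_cast h0
    have hn1 : (1:ℝ) ≤ (n : ℝ) := by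
      have h0 : 1 ≤ n := by omega
      exact_mod_cast h0
    set A : ℝ := (n : ℝ) ^ (p - 1) with hAdef
    have hApos : 0 < A := Real.rpow_pos_of_pos hnpos _
    have hδ3 : (0:ℝ) < δ ^ ((3:ℝ) - p) := Real.rpow_pos_of_pos hδpos _
    -- termwise bound
    have hterm : ∀ i ∈ W n, δ ^ ((3:ℝ) - p) / A * |u n i| ^ p
        ≤ δ ^ ((2:ℝ) - p) * |u n i| ^ (p - 1)
          * Real.tan (δ * |u n i| / (n : ℝ) ^ (p - 1)) := by
      intro i _
      obtain ⟨ha0, ha2⟩ := hargs n hn i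
      have htan : δ * |u n i| / (n : ℝ) ^ (p - 1)
          ≤ Real.tan (δ * |u n i| / (n : ℝ) ^ (p - 1)) := aux_tan_ge _ ha0 ha2
      have hco : (0:ℝ) ≤ δ ^ ((2:ℝ) - p) * |u n i| ^ (p - 1) := by
        have h1 : (0:ℝ) ≤ δ ^ ((2:ℝ) - p) := (Real.rpow_pos_of_pos hδpos _).le
        have h2 : (0:ℝ) ≤ |u n i| ^ (p - 1) := Real.rpow_nonneg (abs_nonneg _) _
        positivity
      have hstep : δ ^ ((2:ℝ) - p) * |u n i| ^ (p - 1) * (δ * |u n i| / (n : ℝ) ^ (p - 1))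
          ≤ δ ^ ((2:ℝ) - p) * |u n i| ^ (p - 1)
            * Real.tan (δ * |u n i| / (n : ℝ) ^ (p - 1)) :=
        mul_le_mul_of_nonneg_left htan hco
      refine le_trans (le_of_eq ?_) hstep
      rcases eq_or_lt_of_le (abs_nonneg (u n i)) with h0 | h0
      · rw [← h0]
        rw [Real.zero_rpow (by linarith : p ≠ 0), Real.zero_rpow hp1']
        ring
      · have he1 : |u n i| ^ (p - 1) * |u n i| = |u n i| ^ p := by
          rw [← Real.rpow_add_one h0.ne']; ring_nf
        have he2 : δ ^ ((3:ℝ) - p) = δ ^ ((2:ℝ) - p) * δ := by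
          rw [← Real.rpow_add_one hδpos.ne']; ring_nf
        rw [← hAdef, he2, ← he1]
        field_simp
    have hsum : δ ^ ((3:ℝ) - p) / A * ∑ i ∈ W n, |u n i| ^ p ≤ T n := by
      rw [Finset.mul_sum]
      exact Finset.sum_le_sum hterm
    -- Hölder
    have hSle : S n ≤ ∑ i ∈ W n, |u n i| :=
      Finset.sum_le_sum fun i _ => le_abs_self _
    have hXnn : (0:ℝ) ≤ ∑ i ∈ W n, |u n i| ^ p :=
      Finset.sum_nonneg fun i _ => Real.rpow_nonneg (abs_nonneg _) _
    set V : ℝ := ((W n).card : ℝ) with hVdef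
    have hV1 : (1:ℝ) ≤ V := by
      have : (W n).Nonempty := by
        refine ⟨0, ?_⟩
        rw [hW, Fintype.mem_piFinset]
        intro k
        rw [Finset.mem_Icc]
        constructor <;> simp
      have hcp := Finset.card_pos.mpr this
      rw [hVdef]
      exact_mod_cast hcp
    have hHold : S n ^ p ≤ V ^ (p - 1) * ∑ i ∈ W n, |u n i| ^ p := by
      calc S n ^ p ≤ (∑ i ∈ W n, |u n i|) ^ p :=
            Real.rpow_le_rpow hSnn hSle (by linarith)
        _ ≤ V ^ (p - 1) * ∑ i ∈ W n, |u n i| ^ p :=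
            Real.rpow_sum_le_const_mul_sum_rpow (W n) (u n) hp1.le
    -- exponent bound: A * V^(p-1) ≤ B^(d(p-1)) * n^(p+1)
    have hAV : A * V ^ (p - 1) ≤ B ^ ((d:ℝ) * (p - 1)) * (n : ℝ) ^ (p + 1) := by
      have hVp : V ^ (p - 1) ≤ ((B * (n:ℝ)) ^ d : ℝ) ^ (p - 1) :=
        Real.rpow_le_rpow (by positivity) (hVle n hn) (by linarith)
      have he : ((B * (n:ℝ)) ^ d : ℝ) ^ (p - 1)
          = B ^ ((d:ℝ) * (p - 1)) * (n:ℝ) ^ ((d:ℝ) * (p - 1)) := by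
        rw [mul_pow, ← Real.rpow_natCast B d, ← Real.rpow_natCast (n:ℝ) d,
          Real.mul_rpow (by positivity) (by positivity),
          ← Real.rpow_mul hBpos.le, ← Real.rpow_mul hnpos.le]
      have h1 : A * V ^ (p - 1)
          ≤ B ^ ((d:ℝ) * (p - 1)) * ((n:ℝ) ^ (p - 1) * (n:ℝ) ^ ((d:ℝ) * (p - 1))) := by
        rw [hAdef]
        calc (n:ℝ) ^ (p-1) * V ^ (p - 1)
            ≤ (n:ℝ) ^ (p-1) * (B ^ ((d:ℝ) * (p - 1)) * (n:ℝ) ^ ((d:ℝ) * (p - 1))) := by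
              apply mul_le_mul_of_nonneg_left _ (by positivity)
              rw [← he]; exact hVp
          _ = B ^ ((d:ℝ) * (p - 1)) * ((n:ℝ) ^ (p - 1) * (n:ℝ) ^ ((d:ℝ) * (p - 1))) := by ring
      have h2 : (n:ℝ) ^ (p - 1) * (n:ℝ) ^ ((d:ℝ) * (p - 1)) ≤ (n:ℝ) ^ (p + 1) := by
        rw [← Real.rpow_add hnpos]
        apply Real.rpow_le_rpow_of_exponent_le hn1
        linarith
      calc A * V ^ (p - 1) ≤ B ^ ((d:ℝ) * (p - 1))
            * ((n:ℝ) ^ (p - 1) * (n:ℝ) ^ ((d:ℝ) * (p - 1))) := h1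
        _ ≤ B ^ ((d:ℝ) * (p - 1)) * (n : ℝ) ^ (p + 1) := by
            apply mul_le_mul_of_nonneg_left h2 (by positivity)
    -- combine
    have hnp1 : (0:ℝ) < (n:ℝ) ^ (p + 1) := Real.rpow_pos_of_pos hnpos _
    have hBd : (0:ℝ) < B ^ ((d:ℝ) * (p - 1)) := Real.rpow_pos_of_pos hBpos _
    have hcoef : c₅ / (n:ℝ) ^ (p + 1) * V ^ (p - 1) ≤ δ ^ ((3:ℝ) - p) / A := by
      rw [le_div_iff₀ hApos]
      have he : c₅ / (n:ℝ) ^ (p + 1) * V ^ (p - 1) * A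
          = δ ^ ((3:ℝ) - p) * (A * V ^ (p - 1))
            / (B ^ ((d:ℝ) * (p - 1)) * (n:ℝ) ^ (p + 1)) := by
        rw [hc₅def]
        field_simp
      rw [he, div_le_iff₀ (by positivity)]
      calc δ ^ ((3:ℝ) - p) * (A * V ^ (p - 1))
          ≤ δ ^ ((3:ℝ) - p) * (B ^ ((d:ℝ) * (p - 1)) * (n:ℝ) ^ (p + 1)) :=
            mul_le_mul_of_nonneg_left hAV hδ3.le
        _ = δ ^ ((3:ℝ) - p) * (B ^ ((d:ℝ) * (p - 1)) * (n:ℝ) ^ (p + 1)) := rfl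
    calc c₅ * S n ^ p / (n : ℝ) ^ (p + 1)
        ≤ c₅ * (V ^ (p - 1) * ∑ i ∈ W n, |u n i| ^ p) / (n : ℝ) ^ (p + 1) := by
          gcongr
      _ = (c₅ / (n:ℝ) ^ (p + 1) * V ^ (p - 1)) * ∑ i ∈ W n, |u n i| ^ p := by ring
      _ ≤ δ ^ ((3:ℝ) - p) / A * ∑ i ∈ W n, |u n i| ^ p := by
          apply mul_le_mul_of_nonneg_right _ hXnn
          exact hcoef
      _ ≤ T n := hsum
  -- D recurrence and monotonicity
  have hDrec : ∀ n, N₀ ≤ n → D (n + 1) = D n + T (n + 1) := by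
    intro n hn
    have := hSrec n hn
    simp only [hD]
    linarith
  have hDmono : ∀ m, N₀ ≤ m → ∀ n, m ≤ n → D m ≤ D n := by
    intro m hm n hmn
    induction n, hmn using Nat.le_induction with
    | base => exact le_refl _
    | succ n hmn ih =>
      have h1 := hDrec n (le_trans hm hmn)
      have h2 := hTn0 (n + 1) (by omega)
      linarith
  -- finsum conversions
  have hfin0 : ∑ᶠ i : Fin d → ℤ, u N₀ i = S N₀ := by
    apply finsum_eq_sum_of_support_subset
    intro i hi
    exact hZWc N₀ le_rfl i hi
  have hfin1 : ∑ᶠ i : Fin d → ℤ, (u (N₀ + 1) i - u N₀ i) = S (N₀ + 1) - S N₀ := by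
    have hsub : Function.support (fun i => u (N₀ + 1) i - u N₀ i) ⊆ ↑(W (N₀ + 1)) := by
      intro i hi
      simp only [Function.mem_support] at hi
      by_contra hiW
      apply hi
      rw [hZW (N₀ + 1) (by omega) i hiW, hZW' N₀ (N₀ + 1) le_rfl (by omega) i hiW]
      ring
    rw [finsum_eq_sum_of_support_subset _ hsub, Finset.sum_sub_distrib]
    have h2 : ∑ i ∈ W (N₀ + 1), u N₀ i = S N₀ :=
      aux_sum_eq (u N₀) _ _ (fun i hi => hZW' N₀ (N₀ + 1) le_rfl (by omega) i hi)
        (fun i hi => hZW N₀ le_rfl i hi)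
    rw [h2]
  have hDN₀ : I < D N₀ := by
    simp only [hD]
    rw [← hfin1]
    exact hsum1
  have hSN₀ : 0 ≤ S N₀ := by rw [← hfin0]; exact hsum0
  have hDI : ∀ n, N₀ ≤ n → I < D n := fun n hn =>
    lt_of_lt_of_le hDN₀ (hDmono N₀ le_rfl n hn)
  -- growth of S
  have hSgrow : ∀ m, N₀ ≤ m → ∀ t : ℕ, S m + (t : ℝ) * D m ≤ S (m + t) := by
    intro m hm t
    induction t with
    | zero => simp
    | succ t ih =>
      have h1 : D m ≤ D (m + t) := hDmono m hm (m + t) (by omega)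
      have h2 : S (m + t + 1) = S (m + t) + D (m + t) := by
        simp only [hD]; ring
      have h3 : m + (t + 1) = m + t + 1 := by omega
      rw [h3, h2]
      push_cast
      linarith
  have hSnn : ∀ n, N₀ ≤ n → 0 ≤ S n := by
    intro n hn
    obtain ⟨t, rfl⟩ := Nat.exists_eq_add_of_le hn
    have h1 := hSgrow N₀ le_rfl t
    have h2 : (0:ℝ) ≤ (t : ℝ) * D N₀ :=
      mul_nonneg (Nat.cast_nonneg t) (by linarith)
    linarith
  -- dyadic setup
  have hP : ∀ k, N₀ ≤ k → N₀ + 1 ≤ 2 ^ k := by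
    intro k hk
    have h1 : N₀ < 2 ^ N₀ := Nat.lt_two_pow_self
    have h2 : 2 ^ N₀ ≤ 2 ^ k := Nat.pow_le_pow_right (by norm_num) hk
    omega
  set c₇ : ℝ := c₅ / 128 with hc₇
  have hc₇pos : 0 < c₇ := by positivity
  -- the dyadic step
  have hkeyD : ∀ k, N₀ ≤ k →
      D (2 ^ (k + 1)) + c₇ * D (2 ^ k) ^ p ≤ D (2 ^ (k + 2)) := by
    intro k hk
    set m1 : ℕ := 2 ^ k with hm1
    have hm1N : N₀ + 1 ≤ m1 := hP k hk
    have hm1pos : (0:ℝ) < (m1 : ℝ) := by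
      have : 0 < m1 := by omega
      exact_mod_cast this
    have hDm1 : 0 < D m1 := lt_trans hI (hDI m1 (by omega))
    set ε : ℝ := c₅ * ((m1 : ℝ) * D m1) ^ p / ((4 * m1 : ℕ) : ℝ) ^ (p + 1) with hε
    have hεnn : 0 ≤ ε := by
      have h1 : (0:ℝ) ≤ ((m1 : ℝ) * D m1) ^ p := Real.rpow_nonneg (by positivity) _
      have h2 : (0:ℝ) < ((4 * m1 : ℕ) : ℝ) ^ (p + 1) := by
        apply Real.rpow_pos_of_pos
        have : 0 < 4 * m1 := by omega
        exact_mod_cast this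
      positivity
    have hclaim : ∀ t, t ≤ 2 * m1 → D (2 * m1) + (t : ℝ) * ε ≤ D (2 * m1 + t) := by
      intro t
      induction t with
      | zero => intro _; simp
      | succ t ih =>
        intro ht
        have ih' := ih (by omega)
        have hdr := hDrec (2 * m1 + t) (by omega)
        have hTb : ε ≤ T (2 * m1 + t + 1) := by
          have hn' : N₀ ≤ 2 * m1 + t + 1 := by omega
          have hSnn' : 0 ≤ S (2 * m1 + t + 1) := hSnn _ hn'
          have hTl := hTlb (2 * m1 + t + 1) hn' hSnn'
          refine le_trans ?_ hTl
          -- ε ≤ c₅ * S(..)^p / (..)^(p+1)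
          have hSlow : (m1 : ℝ) * D m1 ≤ S (2 * m1 + t + 1) := by
            have hg := hSgrow m1 (by omega) (m1 + t + 1)
            have he : m1 + (m1 + t + 1) = 2 * m1 + t + 1 := by omega
            rw [he] at hg
            have hS1 : 0 ≤ S m1 := hSnn m1 (by omega)
            have hcast : (m1 : ℝ) ≤ ((m1 + t + 1 : ℕ) : ℝ) := by
              have : m1 ≤ m1 + t + 1 := by omega
              exact_mod_cast this
            nlinarith [hDm1]
          have hnum : ((m1 : ℝ) * D m1) ^ p ≤ S (2 * m1 + t + 1) ^ p :=
            Real.rpow_le_rpow (by positivity) hSlow (by linarith)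
          have hden : ((2 * m1 + t + 1 : ℕ) : ℝ) ^ (p + 1) ≤ ((4 * m1 : ℕ) : ℝ) ^ (p + 1) := by
            apply Real.rpow_le_rpow (by positivity) _ (by linarith)
            have : 2 * m1 + t + 1 ≤ 4 * m1 := by omega
            exact_mod_cast this
          rw [hε]
          have hdpos : (0:ℝ) < ((2 * m1 + t + 1 : ℕ) : ℝ) ^ (p + 1) := by
            apply Real.rpow_pos_of_pos
            have : 0 < 2 * m1 + t + 1 := by omega
            exact_mod_cast this
          have hnum' : c₅ * ((m1 : ℝ) * D m1) ^ p ≤ c₅ * S (2 * m1 + t + 1) ^ p :=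
            mul_le_mul_of_nonneg_left hnum hc₅pos.le
          exact div_le_div₀ (by positivity) hnum' hdpos hden
        have he2 : 2 * m1 + (t + 1) = 2 * m1 + t + 1 := by omega
        rw [he2, hdr]
        push_cast
        linarith
    have hfin := hclaim (2 * m1) le_rfl
    -- 2 m1 * ε ≥ c₇ * D m1 ^ p
    have hεb : c₇ * D m1 ^ p ≤ (2 * (m1:ℝ)) * ε := by
      have h4m : ((4 * m1 : ℕ) : ℝ) = 4 * (m1 : ℝ) := by push_cast; ring
      have hmul : ((m1 : ℝ) * D m1) ^ p = (m1 : ℝ) ^ p * D m1 ^ p :=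
        Real.mul_rpow hm1pos.le hDm1.le
      have hade : ((4 : ℝ) * m1) ^ (p + 1) = (4 * (m1:ℝ)) ^ p * (4 * m1) := by
        rw [Real.rpow_add_one (by positivity)]
      have hG : (m1 : ℝ) ^ p / (4 * (m1:ℝ)) ^ p = (1/4 : ℝ) ^ p := by
        rw [← Real.div_rpow hm1pos.le (by positivity)]
        congr 1
        field_simp
      have hG64 : (1/64 : ℝ) ≤ (1/4 : ℝ) ^ p := by
        have h1 : (1/4 : ℝ) ^ p ≥ (1/4 : ℝ) ^ (3:ℝ) :=
          Real.rpow_le_rpow_of_exponent_ge (by norm_num) (by norm_num) hp3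
        have h2 : (1/4 : ℝ) ^ (3:ℝ) = 1/64 := by
          rw [show (3:ℝ) = ((3:ℕ):ℝ) by norm_cast, Real.rpow_natCast]
          norm_num
        linarith
      have heq : (2 * (m1:ℝ)) * ε = (c₅ / 2) * D m1 ^ p * ((m1 : ℝ) ^ p / (4 * (m1:ℝ)) ^ p) := by
        rw [hε, h4m, hmul, hade]
        have h4pos : (0:ℝ) < (4 * (m1:ℝ)) ^ p := Real.rpow_pos_of_pos (by positivity) _
        field_simp
        ring
      rw [heq, hG]
      have hDp : (0:ℝ) ≤ D m1 ^ p := Real.rpow_nonneg hDm1.le _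
      rw [hc₇]
      nlinarith [mul_le_mul_of_nonneg_left hG64
        (mul_nonneg (by positivity : (0:ℝ) ≤ c₅ / 2) hDp)]
    have he1 : 2 ^ (k + 1) = 2 * m1 := by rw [hm1]; ring
    have he2 : 2 ^ (k + 2) = 4 * m1 := by rw [hm1]; ring
    rw [he1, he2]
    have : (((2 * m1 : ℕ)) : ℝ) * ε = 2 * (m1:ℝ) * ε := by push_cast; ring
    have h4e : 4 * m1 = 2 * m1 + 2 * m1 := by ring
    rw [h4e]
    calc D (2 * m1) + c₇ * D (2 ^ k) ^ p
        ≤ D (2 * m1) + 2 * (m1:ℝ) * ε := by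
          have h5 : c₇ * D (2 ^ k) ^ p ≤ 2 * (m1:ℝ) * ε := by
            rw [← hm1]; exact hεb
          linarith
      _ ≤ D (2 * m1 + 2 * m1) := by
          have := hfin
          push_cast at this
          linarith
  -- upper bound for S and D
  have hSub : ∀ n, N₀ ≤ n → S n ≤ B ^ d * (π/2) * δ⁻¹ * (n:ℝ) ^ d * (n:ℝ) ^ (p - 1) := by
    intro n hn
    have hnpos : (0:ℝ) < (n : ℝ) := by
      have h0 : 0 < n := by omega
      exact_mod_cast h0
    have hApos : (0:ℝ) < (n:ℝ) ^ (p-1) := Real.rpow_pos_of_pos hnpos _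
    calc S n ≤ ∑ i ∈ W n, |u n i| := Finset.sum_le_sum fun i _ => le_abs_self _
      _ ≤ ∑ i ∈ W n, (π/2 * δ⁻¹ * (n:ℝ) ^ (p-1)) := by
          apply Finset.sum_le_sum
          intro i _
          exact (hcon n (by omega) i).le
      _ = ((W n).card : ℝ) * (π/2 * δ⁻¹ * (n:ℝ) ^ (p-1)) := by
          rw [Finset.sum_const, nsmul_eq_mul]
      _ ≤ (B * (n:ℝ)) ^ d * (π/2 * δ⁻¹ * (n:ℝ) ^ (p-1)) := by
          apply mul_le_mul_of_nonneg_right (hVle n hn)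
          positivity
      _ = B ^ d * (π/2) * δ⁻¹ * (n:ℝ) ^ d * (n:ℝ) ^ (p - 1) := by
          rw [mul_pow]; ring
  set C₁ : ℝ := B ^ d * (π/2) * δ⁻¹ with hC₁
  have hC₁pos : 0 < C₁ := by
    have := Real.pi_pos
    have hB : (0:ℝ) < B ^ d := by positivity
    rw [hC₁]
    positivity
  set E : ℝ := 2 ^ d * 4 with hE
  have hE1 : (1:ℝ) ≤ E := by
    have : (1:ℝ) ≤ 2 ^ d := one_le_pow₀ (by norm_num : (1:ℝ) ≤ 2)
    rw [hE]; nlinarith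
  have hDub : ∀ k, N₀ ≤ k → D (2 ^ k) ≤ (C₁ * E) * E ^ k := by
    intro k hk
    have h2k : N₀ + 1 ≤ 2 ^ k := hP k hk
    have hd1' : D (2 ^ k) ≤ S (2 ^ k + 1) := by
      simp only [hD]
      have := hSnn (2 ^ k) (by omega)
      linarith
    have hs1 := hSub (2 ^ k + 1) (by omega)
    have hcast1 : ((2 ^ k + 1 : ℕ) : ℝ) ≤ ((2 ^ (k+1) : ℕ) : ℝ) := by
      have : 2 ^ k + 1 ≤ 2 ^ (k + 1) := by
        have : 1 ≤ 2 ^ k := Nat.one_le_two_pow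
        omega
      exact_mod_cast this
    have hpos1 : (0:ℝ) < ((2 ^ k + 1 : ℕ) : ℝ) := by positivity
    have h2k1 : ((2 ^ (k+1) : ℕ) : ℝ) = 2 ^ (k+1) := by push_cast; ring
    have hb1 : ((2 ^ k + 1 : ℕ):ℝ) ^ d ≤ ((2:ℝ) ^ (k+1)) ^ d := by
      apply pow_le_pow_left₀ (by positivity)
      rw [← h2k1]; exact hcast1
    have hb2 : ((2 ^ k + 1 : ℕ):ℝ) ^ (p-1) ≤ ((2:ℝ) ^ (k+1)) ^ (p-1) := by
      apply Real.rpow_le_rpow (by positivity) _ (by linarith)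
      rw [← h2k1]; exact hcast1
    have hb3 : ((2:ℝ) ^ (k+1)) ^ (p-1) ≤ ((2:ℝ) ^ (k+1)) ^ (2:ℝ) := by
      apply Real.rpow_le_rpow_of_exponent_le _ (by linarith)
      exact one_le_pow₀ (by norm_num : (1:ℝ) ≤ 2)
    have hb4 : ((2:ℝ) ^ (k+1)) ^ (2:ℝ) = 4 ^ (k+1) := by
      rw [show ((2:ℝ) ^ (k+1)) ^ (2:ℝ) = ((2:ℝ) ^ (k+1)) ^ (2:ℕ) by
        rw [← Real.rpow_natCast ((2:ℝ) ^ (k+1)) 2]; norm_num]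
      rw [← pow_mul, show (4:ℝ) = 2 ^ 2 by norm_num, ← pow_mul]
      congr 1
      omega
    have hb5 : ((2:ℝ) ^ (k+1)) ^ d = (2 ^ d : ℝ) ^ (k+1) := by
      rw [← pow_mul, ← pow_mul, Nat.mul_comm]
    calc D (2 ^ k) ≤ S (2 ^ k + 1) := hd1'
      _ ≤ C₁ * ((2 ^ k + 1 : ℕ):ℝ) ^ d * ((2 ^ k + 1 : ℕ):ℝ) ^ (p-1) := by
          rw [hC₁]; exact hs1
      _ ≤ C₁ * ((2:ℝ) ^ (k+1)) ^ d * (((2:ℝ) ^ (k+1)) ^ (2:ℝ)) := by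
          have h1 : ((2 ^ k + 1 : ℕ):ℝ) ^ (p-1) ≤ ((2:ℝ) ^ (k+1)) ^ (2:ℝ) :=
            le_trans hb2 hb3
          have hnn : (0:ℝ) ≤ ((2 ^ k + 1 : ℕ):ℝ) ^ (p-1) :=
            Real.rpow_nonneg (by positivity) _
          have hnn2 : (0:ℝ) ≤ C₁ * ((2 ^ k + 1 : ℕ):ℝ) ^ d := by positivity
          have hnn3 : (0:ℝ) ≤ C₁ * ((2:ℝ) ^ (k+1)) ^ d := by positivity
          calc C₁ * ((2 ^ k + 1 : ℕ):ℝ) ^ d * ((2 ^ k + 1 : ℕ):ℝ) ^ (p-1)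
              ≤ C₁ * ((2:ℝ) ^ (k+1)) ^ d * ((2 ^ k + 1 : ℕ):ℝ) ^ (p-1) := by
                apply mul_le_mul_of_nonneg_right _ hnn
                exact mul_le_mul_of_nonneg_left hb1 hC₁pos.le
            _ ≤ C₁ * ((2:ℝ) ^ (k+1)) ^ d * (((2:ℝ) ^ (k+1)) ^ (2:ℝ)) :=
                mul_le_mul_of_nonneg_left h1 hnn3
      _ = (C₁ * E) * E ^ k := by
          rw [hb4, hb5]
          have hmp : ((2:ℝ)^d)^(k+1) * (4:ℝ)^(k+1) = E^(k+1) := by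
            rw [hE, mul_pow]
          calc C₁ * ((2:ℝ)^d)^(k+1) * (4:ℝ)^(k+1)
              = C₁ * (((2:ℝ)^d)^(k+1) * (4:ℝ)^(k+1)) := by ring
            _ = C₁ * E^(k+1) := by rw [hmp]
            _ = (C₁ * E) * E^k := by rw [pow_succ]; ring
  -- the b sequence and contradiction
  set bseq : ℕ → ℝ := fun j => D (2 ^ (N₀ + 1 + 2 * j)) with hbseq
  have hbrec : ∀ j, bseq j + c₇ * (bseq j) ^ p ≤ bseq (j + 1) := by
    intro j
    have hk := hkeyD (N₀ + 1 + 2 * j) (by omega)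
    have hmono : D (2 ^ (N₀ + 1 + 2 * j)) ≤ D (2 ^ (N₀ + 1 + 2 * j + 1)) := by
      apply hDmono _ (by have := hP (N₀ + 1 + 2 * j) (by omega); omega)
      apply Nat.pow_le_pow_right (by norm_num)
      omega
    have he : N₀ + 1 + 2 * (j + 1) = N₀ + 1 + 2 * j + 2 := by omega
    simp only [hbseq, he]
    linarith
  have hb0 : I ≤ bseq 0 := (hDI _ (by have := hP (N₀ + 1 + 2 * 0) (by omega); omega)).le
  have hbbound : ∀ j, bseq j ≤ ((C₁ * E) * E ^ (N₀ + 1)) * (E ^ 2) ^ j := by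
    intro j
    have := hDub (N₀ + 1 + 2 * j) (by omega)
    calc bseq j ≤ (C₁ * E) * E ^ (N₀ + 1 + 2 * j) := this
      _ = ((C₁ * E) * E ^ (N₀ + 1)) * (E ^ 2) ^ j := by
          rw [pow_add, ← pow_mul]
          ring
  exact aux_seq_blowup bseq c₇ I p ((C₁ * E) * E ^ (N₀ + 1)) (E ^ 2)
    hc₇pos hI hp1 hb0 hbrec
    (by positivity) (one_le_pow₀ hE1) hbbound
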